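/- Let K be a field, R = K[x_1, …, x_n] graded by positive integer weights w_1, …, w_n (so that the monomial x^α has weight w(α) = α_1 w_1 + ⋯ + α_n w_n), and let I ⊆ R be a W-homogeneous ideal, i.e. an ideal generated by polynomials all of whose monomials have a common weight. For k ≥ 0 let (R/I)_k denote the image in R/I of the K-span of the monomials of weight k. Then each (R/I)_k is a finite-dimensional K-vector space, and there exists a polynomial h(t) ∈ ℤ[t] such that (∑_{k≥0} dim_K (R/I)_k · t^k) · ∏_{i=1}^n (1 − t^{w_i}) = h(t) as formal power series; i.e. the weighted Hilbert–Poincaré series of R/I is the rational function h(t)/∏_{i=1}^n (1 − t^{w_i}). -/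

import Mathlib

open MvPolynomial

set_option maxHeartbeats 1000000
set_option synthInstance.maxHeartbeats 400000

namespace Stmt16Aux

variable {n : ℕ} {K : Type*} [Field K] (w : Fin n → ℕ)

theorem comp_homog_mul {d : ℕ} {f : MvPolynomial (Fin n) K}
    (hf : IsWeightedHomogeneous w f d) (g : MvPolynomial (Fin n) K) (k : ℕ) :
    weightedHomogeneousComponent w k (f * g) =
      if d ≤ k then f * weightedHomogeneousComponent w (k - d) g else 0 := by
  induction g using MvPolynomial.induction_on' with
  | monomial e c =>
    have hm : IsWeightedHomogeneous w (monomial e c) (Finsupp.weight w e) :=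
      isWeightedHomogeneous_monomial _ _ _ rfl
    have hfm : IsWeightedHomogeneous w (f * monomial e c) (d + Finsupp.weight w e) :=
      hf.mul hm
    by_cases hk : k = d + Finsupp.weight w e
    · subst hk
      rw [hfm.weightedHomogeneousComponent_same,
        if_pos (Nat.le_add_right _ _), Nat.add_sub_cancel_left,
        hm.weightedHomogeneousComponent_same]
    · rw [hfm.weightedHomogeneousComponent_ne _ hk]
      split_ifs with h
      · rw [hm.weightedHomogeneousComponent_ne _, mul_zero]
        omega
      · rfl
  | add p q hp hq =>
    rw [mul_add, map_add, hp, hq]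
    split_ifs
    · rw [map_add, mul_add]
    · rw [add_zero]

theorem finiteDimensional_W (hw : ∀ i, 0 < w i) (k : ℕ) :
    FiniteDimensional K (weightedHomogeneousSubmodule K w k) := by
  have hfin : {d : Fin n →₀ ℕ | Finsupp.weight w d ≤ k}.Finite :=
    Finsupp.finite_of_nat_weight_le w (fun x => (hw x).ne') k
  have hfin2 : ((fun d => (monomial d (1 : K))) ''
      {d : Fin n →₀ ℕ | Finsupp.weight w d ≤ k}).Finite := hfin.image _
  haveI := FiniteDimensional.span_of_finite K hfin2
  refine Submodule.finiteDimensional_of_le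
    (S₂ := Submodule.span K ((fun d => (monomial d (1 : K))) ''
      {d : Fin n →₀ ℕ | Finsupp.weight w d ≤ k})) ?_
  intro p hp
  rw [mem_weightedHomogeneousSubmodule] at hp
  rw [p.as_sum]
  refine Submodule.sum_mem _ fun v hv => ?_
  have h1 : monomial v (coeff v p) = (coeff v p) • (monomial v (1 : K)) := by
    rw [smul_monomial, smul_eq_mul, mul_one]
  rw [h1]
  refine Submodule.smul_mem _ _ (Submodule.subset_span ?_)
  exact ⟨v, le_of_eq (hp (mem_support_iff.mp hv)), rfl⟩

/-- `I` is stable under taking weighted-homogeneous components. -/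
def Hom (I : Ideal (MvPolynomial (Fin n) K)) : Prop :=
  ∀ p ∈ I, ∀ k, weightedHomogeneousComponent w k p ∈ I

theorem hom_span {S : Set (MvPolynomial (Fin n) K)}
    (hS : ∀ f ∈ S, ∃ m : ℕ, IsWeightedHomogeneous w f m) :
    Hom w (Ideal.span S) := by
  intro p hp
  induction hp using Submodule.span_induction with
  | mem x hx =>
    obtain ⟨m, hm⟩ := hS x hx
    intro k
    by_cases hk : k = m
    · subst hk
      rw [hm.weightedHomogeneousComponent_same]
      exact Ideal.subset_span hx
    · rw [hm.weightedHomogeneousComponent_ne _ hk]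
      exact zero_mem _
  | zero => intro k; rw [map_zero]; exact zero_mem _
  | add x y _ _ hx hy => intro k; rw [map_add]; exact add_mem (hx k) (hy k)
  | smul r x _ hx =>
    intro k
    have key : ∀ (r : MvPolynomial (Fin n) K),
        (weightedHomogeneousComponent w k) (r * x) ∈ Ideal.span S := by
      intro r
      induction r using MvPolynomial.induction_on' with
      | monomial e c =>
        rw [comp_homog_mul w (isWeightedHomogeneous_monomial _ _ _ rfl)]
        split_ifs
        · exact Ideal.mul_mem_left _ _ (hx _)
        · exact zero_mem _
      | add a b ha hb =>
        rw [add_mul, map_add]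
        exact add_mem ha hb
    exact key r

theorem hom_sup {I : Ideal (MvPolynomial (Fin n) K)} (hI : Hom w I) {f : MvPolynomial (Fin n) K}
    {d : ℕ} (hf : IsWeightedHomogeneous w f d) : Hom w (I ⊔ Ideal.span {f}) := by
  intro p hp k
  obtain ⟨q, hq, r, hr, rfl⟩ := Submodule.mem_sup.mp hp
  obtain ⟨a, rfl⟩ := Ideal.mem_span_singleton'.mp hr
  rw [map_add]
  refine add_mem (Submodule.mem_sup_left (hI q hq k)) (Submodule.mem_sup_right ?_)
  rw [mul_comm a f, comp_homog_mul w hf]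
  split_ifs
  · exact Ideal.mem_span_singleton'.mpr ⟨_, (mul_comm _ _)⟩
  · exact zero_mem _

theorem hom_colon {I : Ideal (MvPolynomial (Fin n) K)} (hI : Hom w I)
    {f : MvPolynomial (Fin n) K} {d : ℕ} (hf : IsWeightedHomogeneous w f d) :
    Hom w (I.colon (Ideal.span {f})) := by
  intro p hp k
  rw [Ideal.mem_colon_span_singleton] at hp ⊢
  have h1 : f * p ∈ I := by rwa [mul_comm]
  have h2 := hI _ h1 (k + d)
  rw [comp_homog_mul w hf, if_pos (Nat.le_add_left _ _), Nat.add_sub_cancel] at h2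
  rwa [mul_comm]

variable (K) in
noncomputable def rF (k : ℕ) : ℕ :=
  Module.finrank K (weightedHomogeneousSubmodule K w k)

noncomputable def dF (I : Ideal (MvPolynomial (Fin n) K)) (k : ℕ) : ℕ :=
  Module.finrank K
    (Submodule.restrictScalars K I ⊓ weightedHomogeneousSubmodule K w k :
      Submodule K (MvPolynomial (Fin n) K))

noncomputable def aZ (I : Ideal (MvPolynomial (Fin n) K)) (k : ℕ) : ℤ :=
  (rF K w k : ℤ) - (dF w I k : ℤ)

section Inter

variable {I : Ideal (MvPolynomial (Fin n) K)} {f : MvPolynomial (Fin n) K} {d : ℕ}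

theorem inter_sup (hI : Hom w I) (hf : IsWeightedHomogeneous w f d) {k : ℕ} (hdk : d ≤ k) :
    Submodule.restrictScalars K ((I ⊔ Ideal.span {f} : Ideal (MvPolynomial (Fin n) K)) :
        Submodule (MvPolynomial (Fin n) K) (MvPolynomial (Fin n) K)) ⊓
      weightedHomogeneousSubmodule K w k
    = (Submodule.restrictScalars K I ⊓ weightedHomogeneousSubmodule K w k) ⊔
      Submodule.map (LinearMap.mulLeft K f) (weightedHomogeneousSubmodule K w (k - d)) := by
  apply le_antisymm
  · rintro p ⟨hpI, hpW⟩
    rw [SetLike.mem_coe, Submodule.restrictScalars_mem] at hpI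
    obtain ⟨q, hq, r, hr, rfl⟩ := Submodule.mem_sup.mp hpI
    obtain ⟨a, rfl⟩ := Ideal.mem_span_singleton'.mp hr
    rw [SetLike.mem_coe, mem_weightedHomogeneousSubmodule] at hpW
    have hP : weightedHomogeneousComponent w k (q + a * f) = q + a * f :=
      hpW.weightedHomogeneousComponent_same
    rw [map_add, mul_comm a f, comp_homog_mul w hf, if_pos hdk] at hP
    rw [show q + a * f = q + f * a from by ring, ← hP]
    refine Submodule.add_mem_sup ?_ ?_
    · exact ⟨Submodule.restrictScalars_mem K _ _ |>.mpr (hI q hq k),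
        weightedHomogeneousComponent_mem w q k⟩
    · exact ⟨_, weightedHomogeneousComponent_mem w a (k - d), rfl⟩
  · apply sup_le
    · exact inf_le_inf_right _ (fun x hx => Submodule.restrictScalars_mem K _ _ |>.mpr
        (Submodule.mem_sup_left (Submodule.restrictScalars_mem K _ _ |>.mp hx)))
    · rintro p ⟨g, hg, rfl⟩
      rw [SetLike.mem_coe, mem_weightedHomogeneousSubmodule] at hg
      constructor
      · simp only [SetLike.mem_coe, Submodule.restrictScalars_mem, LinearMap.mulLeft_apply]
        exact Submodule.mem_sup_right (Ideal.mem_span_singleton'.mpr ⟨g, mul_comm g f⟩)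
      · simp only [SetLike.mem_coe, mem_weightedHomogeneousSubmodule, LinearMap.mulLeft_apply]
        have := hf.mul hg
        rwa [Nat.add_sub_cancel' hdk] at this
theorem inter_sup_lt (hI : Hom w I) (hf : IsWeightedHomogeneous w f d) {k : ℕ} (hdk : k < d) :
    Submodule.restrictScalars K ((I ⊔ Ideal.span {f} : Ideal (MvPolynomial (Fin n) K)) :
        Submodule (MvPolynomial (Fin n) K) (MvPolynomial (Fin n) K)) ⊓
      weightedHomogeneousSubmodule K w k
    = Submodule.restrictScalars K I ⊓ weightedHomogeneousSubmodule K w k := by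
  apply le_antisymm
  · rintro p ⟨hpI, hpW⟩
    rw [SetLike.mem_coe, Submodule.restrictScalars_mem] at hpI
    rw [SetLike.mem_coe, mem_weightedHomogeneousSubmodule] at hpW
    obtain ⟨q, hq, r, hr, rfl⟩ := Submodule.mem_sup.mp hpI
    obtain ⟨a, rfl⟩ := Ideal.mem_span_singleton'.mp hr
    have hP : weightedHomogeneousComponent w k (q + a * f) = q + a * f :=
      hpW.weightedHomogeneousComponent_same
    rw [map_add, mul_comm a f, comp_homog_mul w hf, if_neg (by omega), add_zero] at hP
    have hp2 : q + a * f = weightedHomogeneousComponent w k q := by rw [hP]; ring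
    constructor
    · rw [SetLike.mem_coe, Submodule.restrictScalars_mem, hp2]
      exact hI q hq k
    · rw [SetLike.mem_coe, hp2]
      exact weightedHomogeneousComponent_mem w q k
  · exact inf_le_inf_right _ (fun x hx => Submodule.restrictScalars_mem K _ _ |>.mpr
      (Submodule.mem_sup_left (Submodule.restrictScalars_mem K _ _ |>.mp hx)))

theorem inter_map (hf : IsWeightedHomogeneous w f d) {k : ℕ} (hdk : d ≤ k) :
    (Submodule.restrictScalars K I ⊓ weightedHomogeneousSubmodule K w k) ⊓
      Submodule.map (LinearMap.mulLeft K f) (weightedHomogeneousSubmodule K w (k - d))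
    = Submodule.map (LinearMap.mulLeft K f)
        (Submodule.restrictScalars K (I.colon (Ideal.span {f})) ⊓
          weightedHomogeneousSubmodule K w (k - d)) := by
  apply le_antisymm
  · rintro p ⟨⟨hpI, -⟩, g, hg, rfl⟩
    rw [SetLike.mem_coe, Submodule.restrictScalars_mem] at hpI
    refine ⟨g, ⟨?_, hg⟩, rfl⟩
    rw [SetLike.mem_coe, Submodule.restrictScalars_mem, Ideal.mem_colon_span_singleton]
    rw [LinearMap.mulLeft_apply] at hpI
    rwa [mul_comm]
  · rintro p ⟨g, ⟨hgc, hgW⟩, rfl⟩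
    rw [SetLike.mem_coe, Submodule.restrictScalars_mem, Ideal.mem_colon_span_singleton] at hgc
    rw [SetLike.mem_coe, mem_weightedHomogeneousSubmodule] at hgW
    refine ⟨⟨?_, ?_⟩, ⟨g, hgW, rfl⟩⟩
    · rw [SetLike.mem_coe, Submodule.restrictScalars_mem, LinearMap.mulLeft_apply, mul_comm]
      exact hgc
    · rw [SetLike.mem_coe, mem_weightedHomogeneousSubmodule, LinearMap.mulLeft_apply]
      have := hf.mul hgW
      rwa [Nat.add_sub_cancel' hdk] at this

end Inter

section Key

variable {I : Ideal (MvPolynomial (Fin n) K)} {f : MvPolynomial (Fin n) K} {d : ℕ}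

theorem key (hw : ∀ i, 0 < w i) (hI : Hom w I) (hf : IsWeightedHomogeneous w f d)
    (hf0 : f ≠ 0) {k : ℕ} (hdk : d ≤ k) :
    dF w (I ⊔ Ideal.span {f}) k + dF w (I.colon (Ideal.span {f})) (k - d)
      = dF w I k + rF K w (k - d) := by
  haveI hW1 := finiteDimensional_W (K := K) w hw k
  haveI hW2 := finiteDimensional_W (K := K) w hw (k - d)
  have hinj : Function.Injective (LinearMap.mulLeft K f) := by
    intro a b hab
    simp only [LinearMap.mulLeft_apply] at hab
    exact mul_left_cancel₀ hf0 hab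
  set A : Submodule K (MvPolynomial (Fin n) K) :=
    Submodule.restrictScalars K I ⊓ weightedHomogeneousSubmodule K w k with hA
  set B : Submodule K (MvPolynomial (Fin n) K) :=
    Submodule.map (LinearMap.mulLeft K f) (weightedHomogeneousSubmodule K w (k - d)) with hB
  haveI : FiniteDimensional K A := Submodule.finiteDimensional_of_le inf_le_right
  have eB := (Submodule.equivMapOfInjective (LinearMap.mulLeft K f) hinj
    (weightedHomogeneousSubmodule K w (k - d))).finrank_eq
  haveI : FiniteDimensional K B :=
    FiniteDimensional.of_surjective
      ((Submodule.equivMapOfInjective (LinearMap.mulLeft K f) hinj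
        (weightedHomogeneousSubmodule K w (k - d))).toLinearMap)
      (LinearEquiv.surjective _)
  have h1 : Module.finrank K (A ⊔ B : Submodule K (MvPolynomial (Fin n) K)) +
      Module.finrank K (A ⊓ B : Submodule K (MvPolynomial (Fin n) K)) =
      Module.finrank K A + Module.finrank K B :=
    Submodule.finrank_sup_add_finrank_inf_eq A B
  have h2 : dF w (I ⊔ Ideal.span {f}) k =
      Module.finrank K (A ⊔ B : Submodule K (MvPolynomial (Fin n) K)) := by
    rw [dF, inter_sup w hI hf hdk]
  have h3 : Module.finrank K (A ⊓ B : Submodule K (MvPolynomial (Fin n) K)) =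
      dF w (I.colon (Ideal.span {f})) (k - d) := by
    rw [hA, hB, inter_map w hf hdk, dF]
    exact (Submodule.equivMapOfInjective (LinearMap.mulLeft K f) hinj _).finrank_eq.symm
  have h4 : Module.finrank K B = rF K w (k - d) := by rw [← eB, rF]
  have h5 : dF w I k = Module.finrank K A := rfl
  rw [h2, ← h3, ← h4, h5]
  exact h1

theorem aZ_key (hw : ∀ i, 0 < w i) (hI : Hom w I) (hf : IsWeightedHomogeneous w f d)
    (hf0 : f ≠ 0) (k : ℕ) :
    aZ w I k = aZ w (I ⊔ Ideal.span {f}) k +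
      (if d ≤ k then aZ w (I.colon (Ideal.span {f})) (k - d) else 0) := by
  split_ifs with hdk
  · have h := key w hw hI hf hf0 hdk
    simp only [aZ]
    have := Nat.cast_inj (R := ℤ) |>.mpr h
    push_cast at this ⊢
    linarith
  · have hlt : k < d := by omega
    simp only [aZ, dF]
    rw [inter_sup_lt w hI hf hlt, add_zero]

end Key

theorem dF_top {I : Ideal (MvPolynomial (Fin n) K)}
    (hallX : ∀ i, (X i : MvPolynomial (Fin n) K) ∈ I) {k : ℕ} (hk : 1 ≤ k) :
    dF w I k = rF K w k := by
  have hle : weightedHomogeneousSubmodule K w k ≤ Submodule.restrictScalars K I := by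
    intro p hp
    rw [mem_weightedHomogeneousSubmodule] at hp
    rw [Submodule.restrictScalars_mem]
    rw [p.as_sum]
    refine Submodule.sum_mem _ fun v hv => ?_
    have hwv : Finsupp.weight w v = k := hp (mem_support_iff.mp hv)
    have hv0 : v ≠ 0 := by
      intro h
      rw [h, map_zero] at hwv
      omega
    obtain ⟨i, hi⟩ : ∃ i, v i ≠ 0 := by
      by_contra hc
      push_neg at hc
      exact hv0 (Finsupp.ext hc)
    have hvd : Finsupp.single i 1 + (v - Finsupp.single i 1) = v := by
      ext j
      simp only [Finsupp.add_apply, Finsupp.tsub_apply]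
      by_cases hij : i = j
      · subst hij
        simp only [Finsupp.single_eq_same]
        omega
      · simp only [Finsupp.single_eq_of_ne' hij]
        omega
    have : monomial v (coeff v p) =
        X i * monomial (v - Finsupp.single i 1) (coeff v p) := by
      rw [← pow_one (X i : MvPolynomial (Fin n) K), ← monomial_single_add, hvd]
    rw [this]
    exact Ideal.mul_mem_right _ _ (hallX i)
  have : Submodule.restrictScalars K I ⊓ weightedHomogeneousSubmodule K w k =
      weightedHomogeneousSubmodule K w k := inf_eq_right.mpr hle
  rw [dF, this, rF]

theorem finrank_comp (hw : ∀ i, 0 < w i) (I : Ideal (MvPolynomial (Fin n) K)) (k : ℕ) :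
    Module.finrank K (Submodule.map (Ideal.Quotient.mkₐ K I).toLinearMap
      (weightedHomogeneousSubmodule K w k)) + dF w I k = rF K w k := by
  haveI := finiteDimensional_W (K := K) w hw k
  set q : MvPolynomial (Fin n) K →ₗ[K] (MvPolynomial (Fin n) K ⧸ I) :=
    (Ideal.Quotient.mkₐ K I).toLinearMap with hq
  have hker : LinearMap.ker q = Submodule.restrictScalars K I := by
    ext x
    simp only [LinearMap.mem_ker, hq, AlgHom.toLinearMap_apply, Ideal.Quotient.mkₐ_eq_mk,
      Submodule.restrictScalars_mem]
    exact Ideal.Quotient.eq_zero_iff_mem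
  have hrn := LinearMap.finrank_range_add_finrank_ker
    (q.domRestrict (weightedHomogeneousSubmodule K w k))
  rw [LinearMap.range_domRestrict, LinearMap.ker_domRestrict] at hrn
  have hker2 : Submodule.comap (weightedHomogeneousSubmodule K w k).subtype
      (LinearMap.ker q) = Submodule.comap (weightedHomogeneousSubmodule K w k).subtype
      (Submodule.restrictScalars K I ⊓ weightedHomogeneousSubmodule K w k) := by
    ext x
    simp only [Submodule.mem_comap, Submodule.subtype_apply, Submodule.mem_inf, hker,
      Submodule.restrictScalars_mem]
    exact ⟨fun h => ⟨h, x.2⟩, fun h => h.1⟩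
  rw [hker2] at hrn
  have heq : Module.finrank K (Submodule.comap (weightedHomogeneousSubmodule K w k).subtype
      (Submodule.restrictScalars K I ⊓ weightedHomogeneousSubmodule K w k)) = dF w I k :=
    (Submodule.comapSubtypeEquivOfLe inf_le_right).finrank_eq
  rw [heq] at hrn
  exact hrn

noncomputable def TS (I : Ideal (MvPolynomial (Fin n) K)) : Finset (Fin n) :=
  @Finset.filter _ (fun i => (X i : MvPolynomial (Fin n) K) ∉ I)
    (Classical.decPred _) Finset.univ

theorem mem_TS {I : Ideal (MvPolynomial (Fin n) K)} {i : Fin n} :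
    i ∈ TS I ↔ (X i : MvPolynomial (Fin n) K) ∉ I := by
  simp [TS]

noncomputable def prodP (s : Finset (Fin n)) : Polynomial ℤ :=
  ∏ i ∈ s, (1 - Polynomial.X ^ w i)

noncomputable def PSer (I : Ideal (MvPolynomial (Fin n) K)) : PowerSeries ℤ :=
  PowerSeries.mk fun k => aZ w I k

theorem coe_one_sub (m : ℕ) : ((1 - Polynomial.X ^ m : Polynomial ℤ) : PowerSeries ℤ)
    = 1 - (PowerSeries.X : PowerSeries ℤ) ^ m := by
  rw [Polynomial.coe_sub, Polynomial.coe_one, Polynomial.coe_pow, Polynomial.coe_X]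

theorem main (hw : ∀ i, 0 < w i) (I : Ideal (MvPolynomial (Fin n) K)) (hI : Hom w I) :
    ∃ h : Polynomial ℤ,
      PSer w I * (prodP w (TS I) : PowerSeries ℤ) = (h : PowerSeries ℤ) := by
  revert hI
  induction I using IsNoetherian.induction with
  | _ J IH =>
  intro hJ
  by_cases hX : ∀ i, (X i : MvPolynomial (Fin n) K) ∈ J
  · have hTS : TS J = ∅ := by
      rw [Finset.eq_empty_iff_forall_notMem]
      intro i hiT
      exact (mem_TS.mp hiT) (hX i)
    refine ⟨Polynomial.C (aZ w J 0), ?_⟩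
    rw [hTS, prodP, Finset.prod_empty, Polynomial.coe_one, mul_one]
    ext k
    rw [PSer, PowerSeries.coeff_mk, Polynomial.coeff_coe, Polynomial.coeff_C]
    split_ifs with hk
    · rw [hk]
    · rw [aZ, dF_top w hX (by omega), sub_self]
  · push_neg at hX
    obtain ⟨i, hi⟩ := hX
    have hf : IsWeightedHomogeneous w (X i : MvPolynomial (Fin n) K) (w i) :=
      isWeightedHomogeneous_X K w i
    have hf0 : (X i : MvPolynomial (Fin n) K) ≠ 0 := X_ne_zero i
    set J' := J ⊔ Ideal.span {(X i : MvPolynomial (Fin n) K)} with hJ'def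
    set Cc := J.colon (Ideal.span {(X i : MvPolynomial (Fin n) K)}) with hCcdef
    have hfJ' : (X i : MvPolynomial (Fin n) K) ∈ J' :=
      Submodule.mem_sup_right (Ideal.subset_span rfl)
    have hJJ' : J < J' :=
      lt_of_le_of_ne le_sup_left (fun h => hi (by rw [h]; exact hfJ'))
    have hJC : J ≤ Cc := fun p hp =>
      Ideal.mem_colon_span_singleton.mpr (Ideal.mul_mem_right _ _ hp)
    obtain ⟨h₁, eq₁⟩ := IH J' hJJ' (hom_sup w hJ hf)
    have hiTS : i ∈ TS J := mem_TS.mpr hi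
    have hsub' : TS J' ⊆ (TS J).erase i := by
      intro j hj
      rw [Finset.mem_erase]
      refine ⟨fun hji => (mem_TS.mp hj) (by rw [hji]; exact hfJ'), ?_⟩
      exact mem_TS.mpr (fun hXJ => (mem_TS.mp hj) (Submodule.mem_sup_left hXJ))
    rcases eq_or_lt_of_le hJC with hCeq | hClt
    · -- colon equals J : multiplication by X i is injective on the quotient
      have hser : PSer w J * (1 - (PowerSeries.X : PowerSeries ℤ) ^ (w i)) = PSer w J' := by
        ext k
        rw [mul_sub, mul_one, map_sub, PowerSeries.coeff_mul_X_pow']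
        have hkey := aZ_key w hw hJ hf hf0 k
        rw [← hCcdef, ← hCeq] at hkey
        simp only [PSer, PowerSeries.coeff_mk]
        split_ifs at hkey ⊢ with h
        · linarith
        · linarith
      have hp1 : prodP w (TS J) =
          (1 - Polynomial.X ^ w i) * prodP w ((TS J).erase i) :=
        (Finset.mul_prod_erase _ _ hiTS).symm
      have hp2 : prodP w ((TS J).erase i) =
          prodP w ((TS J).erase i \ TS J') * prodP w (TS J') :=
        (Finset.prod_sdiff hsub').symm
      refine ⟨h₁ * prodP w ((TS J).erase i \ TS J'), ?_⟩
      have expand : (PSer w J * (prodP w (TS J) : PowerSeries ℤ)) =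
          (PSer w J * (1 - (PowerSeries.X : PowerSeries ℤ) ^ w i)) *
            (prodP w (TS J') : PowerSeries ℤ) *
            (prodP w ((TS J).erase i \ TS J') : PowerSeries ℤ) := by
        rw [hp1, hp2, Polynomial.coe_mul, Polynomial.coe_mul, coe_one_sub]
        ring
      rw [expand, hser, eq₁, Polynomial.coe_mul]
    · obtain ⟨h₂, eq₂⟩ := IH Cc hClt (hom_colon w hJ hf)
      have hserie : PSer w J = PSer w J' + PSer w Cc * (PowerSeries.X : PowerSeries ℤ) ^ (w i) := by
        ext k
        simp only [PSer, map_add, PowerSeries.coeff_mk, PowerSeries.coeff_mul_X_pow']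
        exact aZ_key w hw hJ hf hf0 k
      have hsubC : TS Cc ⊆ TS J := fun j hj =>
        mem_TS.mpr (fun hXJ => (mem_TS.mp hj) (hJC hXJ))
      have hsubJ' : TS J' ⊆ TS J := fun j hj =>
        mem_TS.mpr (fun hXJ => (mem_TS.mp hj) (Submodule.mem_sup_left hXJ))
      have hp1 : prodP w (TS J) = prodP w (TS J \ TS J') * prodP w (TS J') :=
        (Finset.prod_sdiff hsubJ').symm
      have hp2 : prodP w (TS J) = prodP w (TS J \ TS Cc) * prodP w (TS Cc) :=
        (Finset.prod_sdiff hsubC).symm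
      refine ⟨prodP w (TS J \ TS J') * h₁ +
        Polynomial.X ^ (w i) * (prodP w (TS J \ TS Cc) * h₂), ?_⟩
      rw [hserie, add_mul]
      have e1 : PSer w J' * (prodP w (TS J) : PowerSeries ℤ) =
          ((prodP w (TS J \ TS J') * h₁ : Polynomial ℤ) : PowerSeries ℤ) := by
        rw [hp1, Polynomial.coe_mul, Polynomial.coe_mul, ← mul_assoc,
          mul_comm (PSer w J') ((prodP w (TS J \ TS J') : Polynomial ℤ) : PowerSeries ℤ),
          mul_assoc, eq₁]
      have e2 : PSer w Cc * (PowerSeries.X : PowerSeries ℤ) ^ (w i) *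
            (prodP w (TS J) : PowerSeries ℤ) =
          ((Polynomial.X ^ (w i) * (prodP w (TS J \ TS Cc) * h₂) : Polynomial ℤ) :
            PowerSeries ℤ) := by
        rw [hp2, Polynomial.coe_mul, Polynomial.coe_mul, Polynomial.coe_mul,
          Polynomial.coe_pow, Polynomial.coe_X]
        calc PSer w Cc * (PowerSeries.X : PowerSeries ℤ) ^ (w i) *
              ((prodP w (TS J \ TS Cc) : PowerSeries ℤ) * (prodP w (TS Cc) : PowerSeries ℤ))
            = (PowerSeries.X : PowerSeries ℤ) ^ (w i) *
                ((prodP w (TS J \ TS Cc) : PowerSeries ℤ) *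
                  (PSer w Cc * (prodP w (TS Cc) : PowerSeries ℤ))) := by ring
          _ = _ := by rw [eq₂]
      rw [e1, e2, Polynomial.coe_add]

end Stmt16Aux

/-- **Hilbert–Serre.** Let `R = K[x_1,…,x_n]` be graded by positive integer
weights and `I` a `W`-homogeneous ideal.  Each weighted component `(R/I)_k` (the image in
`R/I` of the span of the monomials of weight `k`) is finite dimensional over `K`, and the
weighted Hilbert–Poincaré series satisfies `(∑ dim_K (R/I)_k t^k)·∏(1 − t^{w_i}) = h(t)`
for some polynomial `h ∈ ℤ[t]`. -/
theorem stmt_16 (n : ℕ) (hn : 1 ≤ n) (w : Fin n → ℕ) (hw : ∀ i, 0 < w i)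
    (K : Type*) [Field K]
    (I : Ideal (MvPolynomial (Fin n) K))
    (hhom : ∃ S : Set (MvPolynomial (Fin n) K),
      (∀ f ∈ S, ∃ m : ℕ, MvPolynomial.IsWeightedHomogeneous w f m) ∧
      I = Ideal.span S)
    (comp : ℕ → Submodule K (MvPolynomial (Fin n) K ⧸ I))
    (hcomp : ∀ k, comp k = Submodule.map (Ideal.Quotient.mkₐ K I).toLinearMap
      (MvPolynomial.weightedHomogeneousSubmodule K w k)) :
    (∀ k, FiniteDimensional K (comp k)) ∧
    (∃ h : Polynomial ℤ,
      PowerSeries.mk (fun k => (Module.finrank K (comp k) : ℤ)) *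
        ((∏ i, (1 - Polynomial.X ^ w i : Polynomial ℤ)) : PowerSeries ℤ) =
        (h : PowerSeries ℤ)) := by
  obtain ⟨S, hSm, hIS⟩ := hhom
  have hHom : Stmt16Aux.Hom w I := by
    rw [hIS]
    exact Stmt16Aux.hom_span w hSm
  constructor
  · intro k
    rw [hcomp k]
    haveI := Stmt16Aux.finiteDimensional_W (K := K) w hw k
    exact Module.Finite.map _ _
  · have hfr : ∀ k, (Module.finrank K (comp k) : ℤ) = Stmt16Aux.aZ w I k := by
      intro k
      have h := Stmt16Aux.finrank_comp w hw I k
      rw [hcomp k, Stmt16Aux.aZ]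
      have h' := congrArg (Nat.cast : ℕ → ℤ) h
      push_cast at h'
      linarith
    obtain ⟨h, hh⟩ := Stmt16Aux.main w hw I hHom
    refine ⟨h * Stmt16Aux.prodP w (Finset.univ \ Stmt16Aux.TS I), ?_⟩
    have hmk : PowerSeries.mk (fun k => (Module.finrank K (comp k) : ℤ)) =
        Stmt16Aux.PSer w I := by
      ext k
      rw [PowerSeries.coeff_mk, Stmt16Aux.PSer, PowerSeries.coeff_mk, hfr k]
    rw [hmk]
    have hprod : (∏ i, (1 - Polynomial.X ^ w i : Polynomial ℤ)) =
        Stmt16Aux.prodP w (Stmt16Aux.TS I) *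
          Stmt16Aux.prodP w (Finset.univ \ Stmt16Aux.TS I) := by
      rw [Stmt16Aux.prodP, Stmt16Aux.prodP,
        ← Finset.prod_sdiff (Finset.subset_univ (Stmt16Aux.TS I)), mul_comm]
    have hcoeprod : (∏ i, ((1 - Polynomial.X ^ w i : Polynomial ℤ) : PowerSeries ℤ)) =
        ((∏ i, (1 - Polynomial.X ^ w i : Polynomial ℤ) : Polynomial ℤ) : PowerSeries ℤ) := by
      simp only [← Polynomial.coeToPowerSeries.ringHom_apply, ← map_prod]
    rw [hcoeprod, hprod, Polynomial.coe_mul, ← mul_assoc, hh, ← Polynomial.coe_mul]
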